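/- Let G be a bipartite graph with parts X and Y such that for every edge (x,y) with x ∈ X, y ∈ Y, d(y) ≤ d(x). Then there exists a proper edge Δ(G)-coloring φ of G such that for every x ∈ X, the set of colors on edges incident with x equals {1, 2, ..., d(x)}. -/

import Mathlib

/-- A proper edge `t`-coloring of the bipartite graph with parts `α`, `β` and
edge set `E ⊆ α × β`: colors lie in `{1,…,t}`, all colors are used, and
adjacent edges (sharing an endpoint) get distinct colors. -/
def IsProperEdgeColoring {α β : Type*} (E : Finset (α × β)) (t : ℕ)
    (φ : α × β → ℕ) : Prop :=
  (∀ e ∈ E, φ e ∈ Finset.Icc 1 t) ∧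
  (∀ c ∈ Finset.Icc 1 t, ∃ e ∈ E, φ e = c) ∧
  (∀ e ∈ E, ∀ e' ∈ E, e ≠ e' → (e.1 = e'.1 ∨ e.2 = e'.2) → φ e ≠ φ e')

/-- The spectrum of a vertex `x` of the part `α`: the set of colors on edges
incident with `x`. -/
def spectX {α β : Type*} [DecidableEq α] (E : Finset (α × β))
    (φ : α × β → ℕ) (x : α) : Finset ℕ :=
  (E.filter fun e => e.1 = x).image φ

/-- The spectrum of a vertex `y` of the part `β`. -/
def spectY {α β : Type*} [DecidableEq β] (E : Finset (α × β))
    (φ : α × β → ℕ) (y : β) : Finset ℕ :=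
  (E.filter fun e => e.2 = y).image φ

/-- Degree of a vertex of the part `α`. -/
def degX {α β : Type*} [DecidableEq α] (E : Finset (α × β)) (x : α) : ℕ :=
  (E.filter fun e => e.1 = x).card

/-- Degree of a vertex of the part `β`. -/
def degY {α β : Type*} [DecidableEq β] (E : Finset (α × β)) (y : β) : ℕ :=
  (E.filter fun e => e.2 = y).card

/-- A finite set of naturals is an interval: nonempty and consisting of
consecutive integers. -/
def IsIntervalFinset (S : Finset ℕ) : Prop :=
  S.Nonempty ∧ ∀ a ∈ S, ∀ b ∈ S, ∀ c, a ≤ c → c ≤ b → c ∈ S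

/-- The coloring is interval in every vertex of the part `α` (every vertex
with at least one incident edge has an interval spectrum). -/
def IntervalOnX {α β : Type*} [DecidableEq α] (E : Finset (α × β))
    (φ : α × β → ℕ) : Prop :=
  ∀ x : α, (spectX E φ x).Nonempty → IsIntervalFinset (spectX E φ x)

/-- The coloring is interval in every vertex of the part `β`. -/
def IntervalOnY {α β : Type*} [DecidableEq β] (E : Finset (α × β))
    (φ : α × β → ℕ) : Prop :=
  ∀ y : β, (spectY E φ y).Nonempty → IsIntervalFinset (spectY E φ y)

/-- Maximum degree of the bipartite graph. -/
def maxDeg {α β : Type*} [Fintype α] [Fintype β] [DecidableEq α] [DecidableEq β]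
    (E : Finset (α × β)) : ℕ :=
  max (Finset.univ.sup (degX E)) (Finset.univ.sup (degY E))


lemma card_filter_fst {α β : Type*} [DecidableEq α] (E : Finset (α × β)) (s : Finset α) :
    (E.filter fun e => e.1 ∈ s).card = ∑ x ∈ s, degX E x := by
  rw [Finset.card_eq_sum_card_fiberwise (f := Prod.fst) (s := E.filter fun e => e.1 ∈ s) (t := s)
    (fun e he => (Finset.mem_filter.mp he).2)]
  refine Finset.sum_congr rfl fun x hx => ?_
  unfold degX
  congr 1
  rw [Finset.filter_filter]
  refine Finset.filter_congr fun e he => ?_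
  constructor
  · rintro ⟨-, h2⟩; exact h2
  · rintro h2; exact ⟨h2 ▸ hx, h2⟩

lemma card_filter_snd {α β : Type*} [DecidableEq β] (E : Finset (α × β)) (s : Finset β) :
    (E.filter fun e => e.2 ∈ s).card = ∑ y ∈ s, degY E y := by
  rw [Finset.card_eq_sum_card_fiberwise (f := Prod.snd) (s := E.filter fun e => e.2 ∈ s) (t := s)
    (fun e he => (Finset.mem_filter.mp he).2)]
  refine Finset.sum_congr rfl fun y hy => ?_
  unfold degY
  congr 1
  rw [Finset.filter_filter]
  refine Finset.filter_congr fun e he => ?_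
  constructor
  · rintro ⟨-, h2⟩; exact h2
  · rintro h2; exact ⟨h2 ▸ hy, h2⟩


open Classical in
noncomputable def csbIter {α β : Type*} (A : Finset α) (B : Finset β)
    (f : ↥A → β) (g : ↥B → α) : ℕ → Finset ↥A
  | 0 => ∅
  | n + 1 => Finset.univ.filter (fun a =>
      (∀ y : ↥B, g y ≠ ↑a) ∨ ∃ y : ↥B, g y = ↑a ∧ ∃ a' ∈ csbIter A B f g n, f a' = ↑y)

lemma mem_csbIter_succ {α β : Type*} {A : Finset α} {B : Finset β}
    {f : ↥A → β} {g : ↥B → α} {n : ℕ} {a : ↥A} :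
    a ∈ csbIter A B f g (n+1) ↔
      (∀ y : ↥B, g y ≠ ↑a) ∨ ∃ y : ↥B, g y = ↑a ∧ ∃ a' ∈ csbIter A B f g n, f a' = ↑y := by
  simp [csbIter]

lemma csbIter_mono {α β : Type*} {A : Finset α} {B : Finset β}
    {f : ↥A → β} {g : ↥B → α} (n : ℕ) :
    csbIter A B f g n ⊆ csbIter A B f g (n+1) := by
  induction n with
  | zero => intro a ha; simp [csbIter] at ha
  | succ m ih =>
    intro a ha
    rw [mem_csbIter_succ] at ha ⊢
    rcases ha with h | ⟨y, h1, a', h2, h3⟩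
    · exact Or.inl h
    · exact Or.inr ⟨y, h1, a', ih h2, h3⟩

open Classical in
noncomputable def csbS {α β : Type*} (A : Finset α) (B : Finset β)
    (f : ↥A → β) (g : ↥B → α) : Finset ↥A :=
  Finset.univ.filter (fun a => ∃ n, a ∈ csbIter A B f g n)

lemma mem_csbS {α β : Type*} {A : Finset α} {B : Finset β}
    {f : ↥A → β} {g : ↥B → α} {a : ↥A} :
    a ∈ csbS A B f g ↔ ∃ n, a ∈ csbIter A B f g n := by
  simp [csbS]

/-- Mendelsohn–Dulmage style combination of two injections into a matching
covering both sides. -/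
lemma combine_injections {α β : Type*} [DecidableEq α] [DecidableEq β]
    (A : Finset α) (B : Finset β) (f : ↥A → β) (g : ↥B → α)
    (hfinj : Function.Injective f) (hginj : Function.Injective g)
    (hgA : ∀ y : ↥B, g y ∈ A) :
    ∃ M : Finset (α × β),
      (∀ e ∈ M, (∃ a : ↥A, (a.1, f a) = e) ∨ (∃ y : ↥B, (g y, y.1) = e)) ∧
      (∀ e ∈ M, ∀ e' ∈ M, (e.1 = e'.1 ∨ e.2 = e'.2) → e = e') ∧
      (∀ x ∈ A, ∃ e ∈ M, e.1 = x) ∧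
      (∀ y ∈ B, ∃ e ∈ M, e.2 = y) ∧
      (∀ e ∈ M, e.1 ∈ A) := by
  classical
  set S : Finset ↥A := csbS A B f g with hSdef
  have iter_sub_S : ∀ n, csbIter A B f g n ⊆ S :=
    fun n a ha => mem_csbS.mpr ⟨n, ha⟩
  have S_closed : ∀ a ∈ S, ∀ y : ↥B, f a = ↑y → (⟨g y, hgA y⟩ : ↥A) ∈ S := by
    intro a ha y hfa
    obtain ⟨n, hn⟩ := mem_csbS.mp ha
    refine iter_sub_S (n+1) (mem_csbIter_succ.mpr ?_)
    exact Or.inr ⟨y, rfl, a, hn, hfa⟩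
  have S_decomp : ∀ a ∈ S,
      (∀ y : ↥B, g y ≠ ↑a) ∨ ∃ y : ↥B, g y = ↑a ∧ ∃ a' ∈ S, f a' = ↑y := by
    intro a ha
    obtain ⟨n, hn⟩ := mem_csbS.mp ha
    cases n with
    | zero => simp [csbIter] at hn
    | succ m =>
      rcases mem_csbIter_succ.mp hn with h1 | ⟨y, hy1, a', ha', hfa'⟩
      · exact Or.inl h1
      · exact Or.inr ⟨y, hy1, a', iter_sub_S m ha', hfa'⟩
  have S0_sub_S : ∀ a : ↥A, (∀ y : ↥B, g y ≠ ↑a) → a ∈ S := by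
    intro a ha
    exact iter_sub_S 1 (mem_csbIter_succ.mpr (Or.inl ha))
  set M : Finset (α × β) := S.image (fun a => (a.1, f a)) ∪
      (Finset.univ.filter (fun y : ↥B => ∀ a ∈ S, (a:α) ≠ g y)).image
        (fun y => (g y, y.1)) with hM
  refine ⟨M, ?_, ?_, ?_, ?_, ?_⟩
  · intro e he
    rw [hM, Finset.mem_union] at he
    rcases he with h1 | h1
    · obtain ⟨a, _, rfl⟩ := Finset.mem_image.mp h1
      exact Or.inl ⟨a, rfl⟩
    · obtain ⟨y, _, rfl⟩ := Finset.mem_image.mp h1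
      exact Or.inr ⟨y, rfl⟩
  · intro e he e' he' hshare
    rw [hM, Finset.mem_union] at he he'
    rcases he with h1 | h1 <;> rcases he' with h2 | h2
    · obtain ⟨a, haS, rfl⟩ := Finset.mem_image.mp h1
      obtain ⟨a', haS', rfl⟩ := Finset.mem_image.mp h2
      rcases hshare with hx | hy
      · have : a = a' := Subtype.val_injective hx
        rw [this]
      · have : a = a' := hfinj hy
        rw [this]
    · obtain ⟨a, haS, rfl⟩ := Finset.mem_image.mp h1
      obtain ⟨y, hyF, rfl⟩ := Finset.mem_image.mp h2
      have hyP : ∀ a' ∈ S, (a':α) ≠ g y := (Finset.mem_filter.mp hyF).2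
      rcases hshare with hx | hy2
      · exact absurd hx (hyP a haS)
      · have hcl := S_closed a haS y hy2
        exact absurd rfl (hyP _ hcl)
    · obtain ⟨y, hyF, rfl⟩ := Finset.mem_image.mp h1
      obtain ⟨a, haS, rfl⟩ := Finset.mem_image.mp h2
      have hyP : ∀ a' ∈ S, (a':α) ≠ g y := (Finset.mem_filter.mp hyF).2
      rcases hshare with hx | hy2
      · exact absurd hx.symm (hyP a haS)
      · have hcl := S_closed a haS y hy2.symm
        exact absurd rfl (hyP _ hcl)
    · obtain ⟨y, hyF, rfl⟩ := Finset.mem_image.mp h1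
      obtain ⟨y', hyF', rfl⟩ := Finset.mem_image.mp h2
      rcases hshare with hx | hy2
      · have : y = y' := hginj hx
        rw [this]
      · have : y = y' := Subtype.val_injective hy2
        rw [this]
  · intro x hxA
    by_cases haS : (⟨x, hxA⟩ : ↥A) ∈ S
    · exact ⟨(x, f ⟨x, hxA⟩), by
        rw [hM]; exact Finset.mem_union_left _ (Finset.mem_image_of_mem _ haS), rfl⟩
    · have hex : ¬ (∀ y : ↥B, g y ≠ x) := fun hc => haS (S0_sub_S _ hc)
      push_neg at hex
      obtain ⟨y, hy⟩ := hex
      refine ⟨(g y, y.1), ?_, hy⟩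
      rw [hM]
      refine Finset.mem_union_right _ (Finset.mem_image_of_mem _
        (Finset.mem_filter.mpr ⟨Finset.mem_univ _, ?_⟩))
      intro a' ha' hc
      have : a' = (⟨x, hxA⟩ : ↥A) := Subtype.val_injective (by rw [hc, hy])
      exact haS (this ▸ ha')
  · intro y hyB
    by_cases hb : ∀ a ∈ S, (a:α) ≠ g ⟨y, hyB⟩
    · exact ⟨(g ⟨y, hyB⟩, y), by
        rw [hM]; exact Finset.mem_union_right _ (Finset.mem_image_of_mem _
          (Finset.mem_filter.mpr ⟨Finset.mem_univ _, hb⟩)), rfl⟩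
    · push_neg at hb
      obtain ⟨a, haS, ha⟩ := hb
      rcases S_decomp a haS with h1 | ⟨y', hy1, a', ha'S, hfa'⟩
      · exact absurd ha.symm (h1 ⟨y, hyB⟩)
      · have hyy : y' = ⟨y, hyB⟩ := hginj (hy1.trans ha)
        refine ⟨(a'.1, f a'), ?_, ?_⟩
        · rw [hM]; exact Finset.mem_union_left _ (Finset.mem_image_of_mem _ ha'S)
        · rw [hfa', hyy]
  · intro e he
    rw [hM, Finset.mem_union] at he
    rcases he with h1 | h1
    · obtain ⟨a, _, rfl⟩ := Finset.mem_image.mp h1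
      exact a.2
    · obtain ⟨b, _, rfl⟩ := Finset.mem_image.mp h1
      exact hgA b

section matching
variable {α β : Type*} [Fintype α] [Fintype β] [DecidableEq α] [DecidableEq β]

lemma degX_le_maxDeg (E : Finset (α × β)) (x : α) : degX E x ≤ maxDeg E :=
  le_trans (Finset.le_sup (Finset.mem_univ x)) (le_max_left _ _)

lemma degY_le_maxDeg (E : Finset (α × β)) (y : β) : degY E y ≤ maxDeg E :=
  le_trans (Finset.le_sup (Finset.mem_univ y)) (le_max_right _ _)

lemma exists_matching (E : Finset (α × β))
    (h : ∀ e ∈ E, degY E e.2 ≤ degX E e.1) (hΔ : 1 ≤ maxDeg E) :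
    ∃ M : Finset (α × β), M ⊆ E ∧
      (∀ e ∈ M, ∀ e' ∈ M, (e.1 = e'.1 ∨ e.2 = e'.2) → e = e') ∧
      (∀ x, degX E x = maxDeg E → ∃ e ∈ M, e.1 = x) ∧
      (∀ y, degY E y = maxDeg E → ∃ e ∈ M, e.2 = y) ∧
      (∀ e ∈ M, degX E e.1 = maxDeg E) := by
  classical
  set Δ := maxDeg E with hΔdef
  set A : Finset α := Finset.univ.filter (fun x => degX E x = Δ) with hA
  set B : Finset β := Finset.univ.filter (fun y => degY E y = Δ) with hB
  have hΔpos : 0 < Δ := hΔ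
  -- Hall for A
  have hallA : ∀ s : Finset ↥A,
      s.card ≤ (s.biUnion (fun a => (E.filter fun e => e.1 = ↑a).image Prod.snd)).card := by
    intro s
    set T := s.biUnion (fun a => (E.filter fun e => e.1 = ↑a).image Prod.snd) with hT
    have e1 : (E.filter fun e => e.1 ∈ s.image Subtype.val).card
        = ∑ x ∈ s.image Subtype.val, degX E x := card_filter_fst E _
    have e2 : ∑ x ∈ s.image Subtype.val, degX E x = (s.image Subtype.val).card * Δ := by
      rw [Finset.sum_congr rfl (g := fun _ => Δ) ?_, Finset.sum_const, smul_eq_mul]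
      intro x hx
      obtain ⟨a, _, rfl⟩ := Finset.mem_image.mp hx
      exact (Finset.mem_filter.mp a.2).2
    have hsub : (E.filter fun e => e.1 ∈ s.image Subtype.val) ⊆ E.filter fun e => e.2 ∈ T := by
      intro e he
      rw [Finset.mem_filter] at he ⊢
      obtain ⟨heE, h1⟩ := he
      obtain ⟨a, ha, hae⟩ := Finset.mem_image.mp h1
      exact ⟨heE, Finset.mem_biUnion.mpr ⟨a, ha,
        Finset.mem_image.mpr ⟨e, Finset.mem_filter.mpr ⟨heE, hae.symm⟩, rfl⟩⟩⟩
    have e3 : (E.filter fun e => e.2 ∈ T).card = ∑ y ∈ T, degY E y := card_filter_snd E _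
    have e4 : ∑ y ∈ T, degY E y ≤ T.card * Δ := by
      have := Finset.sum_le_card_nsmul T (degY E) Δ (fun y _ => degY_le_maxDeg E y)
      simpa using this
    have hcards : s.card = (s.image Subtype.val).card :=
      (Finset.card_image_of_injective _ Subtype.val_injective).symm
    have : s.card * Δ ≤ T.card * Δ := by
      calc s.card * Δ = (s.image Subtype.val).card * Δ := by rw [hcards]
        _ = (E.filter fun e => e.1 ∈ s.image Subtype.val).card := by rw [e1, e2]
        _ ≤ (E.filter fun e => e.2 ∈ T).card := Finset.card_le_card hsub
        _ ≤ T.card * Δ := by rw [e3] at *; exact e4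
    exact Nat.le_of_mul_le_mul_right this hΔpos
  obtain ⟨f, hfinj, hf⟩ := (Finset.all_card_le_biUnion_card_iff_exists_injective _).mp hallA
  have hfE : ∀ a : ↥A, ((a : α), f a) ∈ E := by
    intro a
    obtain ⟨e, he, he2⟩ := Finset.mem_image.mp (hf a)
    obtain ⟨heE, he1⟩ := Finset.mem_filter.mp he
    have : e = ((a:α), f a) := Prod.ext he1 he2
    rwa [this] at heE
  -- Hall for B
  have hallB : ∀ s : Finset ↥B,
      s.card ≤ (s.biUnion (fun y => (E.filter fun e => e.2 = ↑y).image Prod.fst)).card := by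
    intro s
    set T := s.biUnion (fun y => (E.filter fun e => e.2 = ↑y).image Prod.fst) with hT
    have e1 : (E.filter fun e => e.2 ∈ s.image Subtype.val).card
        = ∑ y ∈ s.image Subtype.val, degY E y := card_filter_snd E _
    have e2 : ∑ y ∈ s.image Subtype.val, degY E y = (s.image Subtype.val).card * Δ := by
      rw [Finset.sum_congr rfl (g := fun _ => Δ) ?_, Finset.sum_const, smul_eq_mul]
      intro y hy
      obtain ⟨b, _, rfl⟩ := Finset.mem_image.mp hy
      exact (Finset.mem_filter.mp b.2).2
    have hsub : (E.filter fun e => e.2 ∈ s.image Subtype.val) ⊆ E.filter fun e => e.1 ∈ T := by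
      intro e he
      rw [Finset.mem_filter] at he ⊢
      obtain ⟨heE, h1⟩ := he
      obtain ⟨b, hb, hbe⟩ := Finset.mem_image.mp h1
      exact ⟨heE, Finset.mem_biUnion.mpr ⟨b, hb,
        Finset.mem_image.mpr ⟨e, Finset.mem_filter.mpr ⟨heE, hbe.symm⟩, rfl⟩⟩⟩
    have e3 : (E.filter fun e => e.1 ∈ T).card = ∑ x ∈ T, degX E x := card_filter_fst E _
    have e4 : ∑ x ∈ T, degX E x ≤ T.card * Δ := by
      have := Finset.sum_le_card_nsmul T (degX E) Δ (fun x _ => degX_le_maxDeg E x)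
      simpa using this
    have hcards : s.card = (s.image Subtype.val).card :=
      (Finset.card_image_of_injective _ Subtype.val_injective).symm
    have : s.card * Δ ≤ T.card * Δ := by
      calc s.card * Δ = (s.image Subtype.val).card * Δ := by rw [hcards]
        _ = (E.filter fun e => e.2 ∈ s.image Subtype.val).card := by rw [e1, e2]
        _ ≤ (E.filter fun e => e.1 ∈ T).card := Finset.card_le_card hsub
        _ ≤ T.card * Δ := by rw [e3] at *; exact e4
    exact Nat.le_of_mul_le_mul_right this hΔpos
  obtain ⟨g, hginj, hg⟩ := (Finset.all_card_le_biUnion_card_iff_exists_injective _).mp hallB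
  have hgE : ∀ y : ↥B, (g y, (y : β)) ∈ E := by
    intro y
    obtain ⟨e, he, he1⟩ := Finset.mem_image.mp (hg y)
    obtain ⟨heE, he2⟩ := Finset.mem_filter.mp he
    have : e = (g y, (y:β)) := Prod.ext he1 he2
    rwa [this] at heE
  have hgA : ∀ y : ↥B, g y ∈ A := by
    intro y
    rw [hA, Finset.mem_filter]
    refine ⟨Finset.mem_univ _, le_antisymm (degX_le_maxDeg E _) ?_⟩
    have hy : degY E (y:β) = Δ := (Finset.mem_filter.mp y.2).2
    have := h _ (hgE y)
    simp only at this
    omega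
  obtain ⟨M, hshape, hmatch, hcovA', hcovB', hMA⟩ := combine_injections A B f g hfinj hginj hgA
  have hME : M ⊆ E := by
    intro e he
    rcases hshape e he with ⟨a, rfl⟩ | ⟨y, rfl⟩
    · exact hfE a
    · exact hgE y
  refine ⟨M, hME, hmatch, ?_, ?_, ?_⟩
  · intro x hx
    exact hcovA' x (Finset.mem_filter.mpr ⟨Finset.mem_univ _, hx⟩)
  · intro y hy
    exact hcovB' y (Finset.mem_filter.mpr ⟨Finset.mem_univ _, hy⟩)
  · intro e he
    exact (Finset.mem_filter.mp (hMA e he)).2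

end matching


section mainproof
variable {α β : Type*} [Fintype α] [Fintype β] [DecidableEq α] [DecidableEq β]

lemma filter_sdiff' {γ : Type*} [DecidableEq γ] (s t : Finset γ) (p : γ → Prop)
    [DecidablePred p] : (s \ t).filter p = s.filter p \ t.filter p := by
  ext a
  simp only [Finset.mem_filter, Finset.mem_sdiff]
  tauto

lemma stmt3_empty :
    ∃ φ : α × β → ℕ, IsProperEdgeColoring (∅ : Finset (α × β))
        (maxDeg (∅ : Finset (α × β))) φ ∧
      ∀ x : α, spectX (∅ : Finset (α × β)) φ x
        = Finset.Icc 1 (degX (∅ : Finset (α × β)) x) := by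
  have hmd : maxDeg (∅ : Finset (α × β)) = 0 := by
    have h1 : Finset.univ.sup (degX (∅ : Finset (α × β))) = 0 :=
      Nat.eq_zero_of_le_zero (Finset.sup_le fun x _ => by simp [degX])
    have h2 : Finset.univ.sup (degY (∅ : Finset (α × β))) = 0 :=
      Nat.eq_zero_of_le_zero (Finset.sup_le fun y _ => by simp [degY])
    unfold maxDeg
    rw [h1, h2]
    simp
  refine ⟨fun _ => 0, ⟨?_, ?_, ?_⟩, ?_⟩
  · intro e he; simp at he
  · intro c hc; rw [hmd] at hc; simp at hc
  · intro e he; simp at he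
  · intro x
    have : degX (∅ : Finset (α × β)) x = 0 := by simp [degX]
    rw [this]
    simp [spectX]

theorem stmt3' (E : Finset (α × β))
    (h : ∀ e ∈ E, degY E e.2 ≤ degX E e.1) :
    ∃ φ : α × β → ℕ, IsProperEdgeColoring E (maxDeg E) φ ∧
      ∀ x : α, spectX E φ x = Finset.Icc 1 (degX E x) := by
  classical
  suffices H : ∀ (n : ℕ) (E : Finset (α × β)), E.card ≤ n →
      (∀ e ∈ E, degY E e.2 ≤ degX E e.1) →
      ∃ φ : α × β → ℕ, IsProperEdgeColoring E (maxDeg E) φ ∧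
        ∀ x : α, spectX E φ x = Finset.Icc 1 (degX E x) by
    exact H E.card E le_rfl h
  intro n
  induction n with
  | zero =>
    intro E hcard _
    have : E = ∅ := Finset.card_eq_zero.mp (Nat.le_zero.mp hcard)
    subst this
    exact stmt3_empty
  | succ n ih =>
    intro E hcard h
    by_cases hE : E = ∅
    · subst hE; exact stmt3_empty
    obtain ⟨e₀, he₀⟩ := Finset.nonempty_iff_ne_empty.mpr hE
    have hΔ : 1 ≤ maxDeg E := by
      have h1 : 1 ≤ degX E e₀.1 :=
        Finset.card_pos.mpr ⟨e₀, Finset.mem_filter.mpr ⟨he₀, rfl⟩⟩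
      exact le_trans h1 (degX_le_maxDeg E e₀.1)
    -- there is a vertex on the X side of maximum degree
    have hexmax : ∃ x, degX E x = maxDeg E := by
      rcases max_cases (Finset.univ.sup (degX E)) (Finset.univ.sup (degY E)) with
        ⟨hmx, _⟩ | ⟨hmx, hlt⟩
      · obtain ⟨x, _, hx⟩ :=
          Finset.exists_mem_eq_sup Finset.univ ⟨e₀.1, Finset.mem_univ _⟩ (degX E)
        refine ⟨x, ?_⟩
        have hmd : maxDeg E = Finset.univ.sup (degX E) := hmx
        rw [hmd, hx]
      · obtain ⟨y, _, hy⟩ :=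
          Finset.exists_mem_eq_sup Finset.univ ⟨e₀.2, Finset.mem_univ _⟩ (degY E)
        have hymax : degY E y = maxDeg E := by
          have hmd : maxDeg E = Finset.univ.sup (degY E) := hmx
          rw [hmd, hy]
        have h1 : 1 ≤ degY E y := hymax ▸ hΔ
        have h2 : (E.filter fun e => e.2 = y).Nonempty := Finset.card_pos.mp h1
        obtain ⟨e, he⟩ := h2
        obtain ⟨heE, hey⟩ := Finset.mem_filter.mp he
        have c1 : degY E e.2 ≤ degX E e.1 := h e heE
        rw [hey] at c1
        have c2 : degX E e.1 ≤ Finset.univ.sup (degX E) :=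
          Finset.le_sup (Finset.mem_univ _)
        have c3 : Finset.univ.sup (degY E) = degY E y := hy
        omega
    obtain ⟨M, hME, hmatch, hcovA, hcovB, hMdeg⟩ := exists_matching E h hΔ
    obtain ⟨x₀, hx₀⟩ := hexmax
    obtain ⟨em, hemM, hem1⟩ := hcovA x₀ hx₀
    set E' : Finset (α × β) := E \ M with hE'def
    -- number of M-edges at a vertex
    have hMx1 : ∀ x, degX E x = maxDeg E → (M.filter fun e => e.1 = x).card = 1 := by
      intro x hx
      obtain ⟨e, heM, he1⟩ := hcovA x hx
      have hmem : e ∈ M.filter fun e => e.1 = x := Finset.mem_filter.mpr ⟨heM, he1⟩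
      have hle : (M.filter fun e => e.1 = x).card ≤ 1 := by
        refine Finset.card_le_one.mpr ?_
        intro a ha b hb
        exact hmatch a (Finset.mem_filter.mp ha).1 b (Finset.mem_filter.mp hb).1
          (Or.inl ((Finset.mem_filter.mp ha).2.trans (Finset.mem_filter.mp hb).2.symm))
      have hge : 1 ≤ (M.filter fun e => e.1 = x).card := Finset.card_pos.mpr ⟨e, hmem⟩
      omega
    have hMx0 : ∀ x, degX E x ≠ maxDeg E → (M.filter fun e => e.1 = x) = ∅ := by
      intro x hx
      rw [Finset.filter_eq_empty_iff]
      intro e heM he1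
      exact hx (he1 ▸ hMdeg e heM)
    have hMy1 : ∀ y, degY E y = maxDeg E → (M.filter fun e => e.2 = y).card = 1 := by
      intro y hy
      obtain ⟨e, heM, he2⟩ := hcovB y hy
      have hmem : e ∈ M.filter fun e => e.2 = y := Finset.mem_filter.mpr ⟨heM, he2⟩
      have hle : (M.filter fun e => e.2 = y).card ≤ 1 := by
        refine Finset.card_le_one.mpr ?_
        intro a ha b hb
        exact hmatch a (Finset.mem_filter.mp ha).1 b (Finset.mem_filter.mp hb).1
          (Or.inr ((Finset.mem_filter.mp ha).2.trans (Finset.mem_filter.mp hb).2.symm))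
      have hge : 1 ≤ (M.filter fun e => e.2 = y).card := Finset.card_pos.mpr ⟨e, hmem⟩
      omega
    have degX' : ∀ x, degX E' x = degX E x - (M.filter fun e => e.1 = x).card := by
      intro x
      unfold degX
      rw [hE'def, filter_sdiff',
        Finset.card_sdiff_of_subset (Finset.filter_subset_filter _ hME)]
    have degY' : ∀ y, degY E' y = degY E y - (M.filter fun e => e.2 = y).card := by
      intro y
      unfold degY
      rw [hE'def, filter_sdiff',
        Finset.card_sdiff_of_subset (Finset.filter_subset_filter _ hME)]
    have degX'_eq : ∀ x, degX E' x
        = if degX E x = maxDeg E then maxDeg E - 1 else degX E x := by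
      intro x
      by_cases hx : degX E x = maxDeg E
      · rw [degX' x, hMx1 x hx, if_pos hx, hx]
      · rw [degX' x, hMx0 x hx, if_neg hx]
        simp
    have degY'_le : ∀ y, degY E' y ≤ degY E y := by
      intro y; rw [degY' y]; omega
    have degY'_lt : ∀ y, degY E' y ≤ maxDeg E - 1 := by
      intro y
      by_cases hy : degY E y = maxDeg E
      · rw [degY' y, hMy1 y hy, hy]
      · have := degY_le_maxDeg E y
        have := degY'_le y
        omega
    have degX'_lt : ∀ x, degX E' x ≤ maxDeg E - 1 := by
      intro x
      rw [degX'_eq x]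
      by_cases hx : degX E x = maxDeg E
      · rw [if_pos hx]
      · rw [if_neg hx]
        have := degX_le_maxDeg E x
        omega
    have hmax' : maxDeg E' = maxDeg E - 1 := by
      apply le_antisymm
      · exact max_le (Finset.sup_le fun x _ => degX'_lt x)
          (Finset.sup_le fun y _ => degY'_lt y)
      · have h1 : degX E' x₀ = maxDeg E - 1 := by
          rw [degX'_eq x₀, if_pos hx₀]
        calc maxDeg E - 1 = degX E' x₀ := h1.symm
          _ ≤ maxDeg E' := degX_le_maxDeg E' x₀
    have h' : ∀ e ∈ E', degY E' e.2 ≤ degX E' e.1 := by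
      intro e he
      have heE : e ∈ E := (Finset.mem_sdiff.mp he).1
      by_cases hx : degX E e.1 = maxDeg E
      · rw [degX'_eq, if_pos hx]
        exact degY'_lt e.2
      · rw [degX'_eq, if_neg hx]
        exact le_trans (degY'_le e.2) (h e heE)
    have hcard' : E'.card ≤ n := by
      have h1 : E' ⊂ E := Finset.sdiff_ssubset hME ⟨em, hemM⟩
      have h2 : E'.card < E.card := Finset.card_lt_card h1
      omega
    obtain ⟨φ', hproper', hspect'⟩ := ih E' hcard' h'
    rw [hmax'] at hproper'
    obtain ⟨hrange', hsurj', hprop'⟩ := hproper'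
    set φ : α × β → ℕ := fun e => if e ∈ M then maxDeg E else φ' e with hφ
    have hφM : ∀ e ∈ M, φ e = maxDeg E := by
      intro e he; simp [hφ, he]
    have hφ' : ∀ e ∉ M, φ e = φ' e := by
      intro e he; simp [hφ, he]
    refine ⟨φ, ⟨?_, ?_, ?_⟩, ?_⟩
    · -- range
      intro e he
      by_cases heM : e ∈ M
      · rw [hφM e heM]
        exact Finset.mem_Icc.mpr ⟨hΔ, le_rfl⟩
      · rw [hφ' e heM]
        have := hrange' e (Finset.mem_sdiff.mpr ⟨he, heM⟩)
        rw [Finset.mem_Icc] at *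
        omega
    · -- surjectivity
      intro c hc
      rw [Finset.mem_Icc] at hc
      by_cases hcΔ : c = maxDeg E
      · exact ⟨em, hME hemM, by rw [hφM em hemM, hcΔ]⟩
      · obtain ⟨e, heE', hec⟩ := hsurj' c (Finset.mem_Icc.mpr ⟨hc.1, by omega⟩)
        have heM : e ∉ M := (Finset.mem_sdiff.mp heE').2
        exact ⟨e, (Finset.mem_sdiff.mp heE').1, by rw [hφ' e heM]; exact hec⟩
    · -- properness
      intro e he e' he' hne hadj
      by_cases h1 : e ∈ M <;> by_cases h2 : e' ∈ M
      · exact absurd (hmatch e h1 e' h2 hadj) hne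
      · rw [hφM e h1, hφ' e' h2]
        have := hrange' e' (Finset.mem_sdiff.mpr ⟨he', h2⟩)
        rw [Finset.mem_Icc] at this
        omega
      · rw [hφ' e h1, hφM e' h2]
        have := hrange' e (Finset.mem_sdiff.mpr ⟨he, h1⟩)
        rw [Finset.mem_Icc] at this
        omega
      · rw [hφ' e h1, hφ' e' h2]
        exact hprop' e (Finset.mem_sdiff.mpr ⟨he, h1⟩) e' (Finset.mem_sdiff.mpr ⟨he', h2⟩)
          hne hadj
    · -- spectra
      intro x
      have hsplit : E.filter (fun e => e.1 = x)
          = E'.filter (fun e => e.1 = x) ∪ M.filter (fun e => e.1 = x) := by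
        rw [hE'def, filter_sdiff',
          Finset.sdiff_union_of_subset (Finset.filter_subset_filter _ hME)]
      have himg1 : (E'.filter fun e => e.1 = x).image φ
          = (E'.filter fun e => e.1 = x).image φ' := by
        apply Finset.image_congr
        intro e he
        rw [Finset.mem_coe, Finset.mem_filter] at he
        exact hφ' e (Finset.mem_sdiff.mp he.1).2
      have hspx : (E'.filter fun e => e.1 = x).image φ' = Finset.Icc 1 (degX E' x) :=
        hspect' x
      unfold spectX
      rw [hsplit, Finset.image_union, himg1, hspx]
      by_cases hx : degX E x = maxDeg E
      · obtain ⟨e1, he1M, he11⟩ := hcovA x hx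
        have hMf : M.filter (fun e => e.1 = x) = {e1} := by
          apply Finset.eq_singleton_iff_unique_mem.mpr
          refine ⟨Finset.mem_filter.mpr ⟨he1M, he11⟩, ?_⟩
          intro e he
          exact hmatch e (Finset.mem_filter.mp he).1 e1 he1M
            (Or.inl ((Finset.mem_filter.mp he).2.trans he11.symm))
        rw [hMf, Finset.image_singleton, hφM e1 he1M, degX'_eq x, if_pos hx, hx]
        ext c
        simp only [Finset.mem_union, Finset.mem_Icc, Finset.mem_singleton]
        omega
      · rw [hMx0 x hx, Finset.image_empty, Finset.union_empty, degX'_eq x, if_neg hx]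

end mainproof

/-- If for every edge `(x,y)` we have `d(y) ≤ d(x)`, then there is
a proper edge `Δ(G)`-coloring whose spectrum at every `x ∈ X` is
`{1,…,d(x)}`. -/
theorem stmt3 {α β : Type*} [Fintype α] [Fintype β] [DecidableEq α] [DecidableEq β]
    (E : Finset (α × β))
    (h : ∀ e ∈ E, degY E e.2 ≤ degX E e.1) :
    ∃ φ : α × β → ℕ, IsProperEdgeColoring E (maxDeg E) φ ∧
      ∀ x : α, spectX E φ x = Finset.Icc 1 (degX E x) := by
  exact stmt3' E h
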